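/- Let F : [0,T] → [0,x_f] be C², strictly increasing, surjective with F(0)=0, and suppose there is t₀ ∈ (0,T) with F'(t₀)=0, F'''(t₀) existing and nonzero. Set x₀ = F(t₀) and v = F' ∘ F⁻¹ where F⁻¹ is the (ordinary) inverse of F. Then v is not differentiable at x₀. -/

import Mathlib

open Set Filter

/-- If `g` is continuous on `[a,b]` with nonnegative derivative on `(a,b)`,
then `g a ≤ g t` for all `t ∈ [a,b]`. -/
lemma stmt4_mono_aux {a b : ℝ} (hab : a ≤ b) {g g' : ℝ → ℝ}
    (hc : ContinuousOn g (Icc a b))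
    (hd : ∀ t ∈ Ioo a b, HasDerivWithinAt g (g' t) (Ioo a b) t)
    (h0 : ∀ t ∈ Ioo a b, 0 ≤ g' t) : ∀ t ∈ Icc a b, g a ≤ g t := by
  have hmono : MonotoneOn g (Icc a b) := by
    apply monotoneOn_of_hasDerivWithinAt_nonneg (convex_Icc a b) hc
    · intro x hx
      rw [interior_Icc] at hx ⊢
      exact hd x hx
    · intro x hx
      rw [interior_Icc] at hx
      exact h0 x hx
  intro t ht
  exact hmono (left_mem_Icc.2 hab) ht ht.1

set_option maxHeartbeats 1000000 in
theorem stmt_4 (T xf : ℝ) (hT : 0 < T) (hxf : 0 < xf)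
    (F F' F'' : ℝ → ℝ) (F₃ : ℝ)
    (hsm : StrictMonoOn F (Icc 0 T))
    (hd1 : ∀ t ∈ Icc 0 T, HasDerivWithinAt F (F' t) (Icc 0 T) t)
    (hd2 : ∀ t ∈ Icc 0 T, HasDerivWithinAt F' (F'' t) (Icc 0 T) t)
    (hF''cont : ContinuousOn F'' (Icc 0 T))
    (hF0 : F 0 = 0) (hFT : F T = xf)
    (t₀ : ℝ) (ht₀ : t₀ ∈ Ioo 0 T) (hF't₀ : F' t₀ = 0)
    (hd3 : HasDerivWithinAt F'' F₃ (Icc 0 T) t₀) (hF₃ : F₃ ≠ 0)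
    (Finv : ℝ → ℝ)
    (hFinvF : ∀ t ∈ Icc 0 T, Finv (F t) = t)
    (hFFinv : ∀ x ∈ Icc 0 xf, F (Finv x) = x) :
    ¬ DifferentiableWithinAt ℝ (fun x => F' (Finv x)) (Icc 0 xf) (F t₀) := by
  intro hdiff
  have ht₀Icc : t₀ ∈ Icc 0 T := Ioo_subset_Icc_self ht₀
  have hIccmem : Icc 0 T ∈ nhds t₀ := Icc_mem_nhds ht₀.1 ht₀.2
  -- F' is nonnegative on [0, T)
  have hF'nonneg : ∀ t ∈ Ico 0 T, 0 ≤ F' t := by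
    intro t ht
    have htIcc : t ∈ Icc 0 T := Ico_subset_Icc_self ht
    have hsl := hasDerivWithinAt_iff_tendsto_slope.mp (hd1 t htIcc)
    have hsub : Ioo t T ⊆ Icc 0 T \ {t} := by
      intro y hy
      exact ⟨⟨le_trans ht.1 (le_of_lt hy.1), le_of_lt hy.2⟩, ne_of_gt hy.1⟩
    have hsl' : Tendsto (slope F t) (nhdsWithin t (Ioo t T)) (nhds (F' t)) :=
      hsl.mono_left (nhdsWithin_mono _ hsub)
    have : (nhdsWithin t (Ioo t T)).NeBot := left_nhdsWithin_Ioo_neBot ht.2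
    refine ge_of_tendsto hsl' ?_
    filter_upwards [self_mem_nhdsWithin] with y hy
    rw [slope_def_field]
    have hyIcc : y ∈ Icc 0 T := ⟨le_trans ht.1 (le_of_lt hy.1), le_of_lt hy.2⟩
    have : F t < F y := hsm htIcc hyIcc hy.1
    exact div_nonneg (by linarith) (by linarith [hy.1])
  -- t₀ is a local minimum of F', so F'' t₀ = 0
  have hF''t₀ : F'' t₀ = 0 := by
    have hmin : IsLocalMin F' t₀ := by
      filter_upwards [isOpen_Ioo.mem_nhds ht₀] with t ht
      rw [hF't₀]
      exact hF'nonneg t ⟨le_of_lt ht.1, ht.2⟩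
    exact hmin.hasDerivAt_eq_zero ((hd2 t₀ ht₀Icc).hasDerivAt hIccmem)
  -- slope of F'' at t₀ tends to F₃
  have hslF'' : Tendsto (slope F'' t₀) (nhdsWithin t₀ {t₀}ᶜ) (nhds F₃) :=
    hasDerivAt_iff_tendsto_slope.mp (hd3.hasDerivAt hIccmem)
  have hslF''r : Tendsto (slope F'' t₀) (nhdsWithin t₀ (Ioi t₀)) (nhds F₃) :=
    hslF''.mono_left (nhdsWithin_mono _ (fun y hy => ne_of_gt hy))
  have habs : ∀ᶠ y in nhdsWithin t₀ (Ioi t₀), |slope F'' t₀ y - F₃| < |F₃| / 2 := by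
    have : (0:ℝ) < |F₃| / 2 := by positivity
    filter_upwards [hslF''r (Metric.ball_mem_nhds F₃ this)] with y hy
    simpa [Real.dist_eq] using hy
  obtain ⟨u, hu, huIoo⟩ := mem_nhdsGT_iff_exists_Ioo_subset.mp habs
  -- pick t₁ with t₀ < t₁ < min u T
  set δ : ℝ := min (u - t₀) (T - t₀) / 2 with hδdef
  have hδpos : 0 < δ := by
    have h1 : (0:ℝ) < u - t₀ := by simpa [sub_pos] using hu
    have h2 : (0:ℝ) < T - t₀ := by linarith [ht₀.2]
    positivity
  set t₁ : ℝ := t₀ + δ with ht₁def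
  have ht₁u : t₁ < u := by
    have : δ ≤ (u - t₀) / 2 := by
      apply div_le_div_of_nonneg_right (min_le_left _ _)
      norm_num
    have h1 : (0:ℝ) < u - t₀ := by simpa [sub_pos] using hu
    simp only [ht₁def]; linarith
  have ht₁T : t₁ < T := by
    have : δ ≤ (T - t₀) / 2 := by
      apply div_le_div_of_nonneg_right (min_le_right _ _)
      norm_num
    have h2 : (0:ℝ) < T - t₀ := by linarith [ht₀.2]
    simp only [ht₁def]; linarith
  have ht₀t₁ : t₀ < t₁ := by simp only [ht₁def]; linarith
  have hsubIcc : Icc t₀ t₁ ⊆ Icc 0 T := by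
    intro y hy
    exact ⟨le_trans (le_of_lt ht₀.1) hy.1, le_trans hy.2 (le_of_lt ht₁T)⟩
  have hsubIoo : Ioo t₀ t₁ ⊆ Icc 0 T := fun y hy => hsubIcc (Ioo_subset_Icc_self hy)
  -- bounds on F'' on (t₀, t₁)
  have hF''bound : ∀ y ∈ Ioo t₀ t₁,
      F₃ - |F₃| / 2 ≤ F'' y / (y - t₀) ∧ F'' y / (y - t₀) ≤ F₃ + |F₃| / 2 := by
    intro y hy
    have hyu : y ∈ Ioo t₀ u := ⟨hy.1, lt_trans hy.2 ht₁u⟩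
    have h2 := huIoo hyu
    simp only [mem_setOf_eq] at h2
    rw [slope_def_field, hF''t₀, sub_zero] at h2
    have h3 := abs_lt.mp h2
    constructor <;> linarith [h3.1, h3.2]
  -- F₃ must be positive
  have hF₃pos : 0 < F₃ := by
    rcases lt_or_gt_of_ne hF₃ with hneg | hpos
    · exfalso
      -- F'' < 0 on (t₀, t₁), so F' is strictly decreasing, F' t₁ < 0
      have hF''neg : ∀ y ∈ Ioo t₀ t₁, F'' y < 0 := by
        intro y hy
        have hb := (hF''bound y hy).2
        have habs : |F₃| = -F₃ := abs_of_neg hneg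
        rw [habs] at hb
        have hypos : 0 < y - t₀ := by linarith [hy.1]
        have : F'' y / (y - t₀) < 0 := lt_of_le_of_lt hb (by linarith)
        exact (div_neg_iff.mp this).resolve_left (fun h => absurd h.2 (not_lt.2 (le_of_lt hypos))) |>.1
      have hF'cont : ContinuousOn F' (Icc 0 T) := fun t ht => (hd2 t ht).continuousWithinAt
      have hanti : StrictAntiOn F' (Icc t₀ t₁) := by
        apply strictAntiOn_of_hasDerivWithinAt_neg (convex_Icc t₀ t₁) (hF'cont.mono hsubIcc)
        · intro x hx
          rw [interior_Icc] at hx ⊢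
          exact (hd2 x (hsubIoo hx)).mono hsubIoo
        · intro x hx
          rw [interior_Icc] at hx
          exact hF''neg x hx
      have : F' t₁ < F' t₀ := hanti (left_mem_Icc.2 (le_of_lt ht₀t₁))
        (right_mem_Icc.2 (le_of_lt ht₀t₁)) ht₀t₁
      rw [hF't₀] at this
      exact absurd this (not_lt.2 (hF'nonneg t₁ ⟨by linarith [ht₀.1], ht₁T⟩))
    · exact hpos
  have habsF₃ : |F₃| = F₃ := abs_of_pos hF₃pos
  -- quantitative bounds on F'' : F₃(y-t₀)/2 ≤ F'' y ≤ 3F₃(y-t₀)/2 on (t₀,t₁)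
  have hF''lb : ∀ y ∈ Ioo t₀ t₁, F₃ * (y - t₀) / 2 ≤ F'' y := by
    intro y hy
    have hb := (hF''bound y hy).1
    rw [habsF₃] at hb
    have hypos : 0 < y - t₀ := by linarith [hy.1]
    rw [le_div_iff₀ hypos] at hb
    nlinarith
  have hF''ub : ∀ y ∈ Ioo t₀ t₁, F'' y ≤ 3 * F₃ * (y - t₀) / 2 := by
    intro y hy
    have hb := (hF''bound y hy).2
    rw [habsF₃] at hb
    have hypos : 0 < y - t₀ := by linarith [hy.1]
    rw [div_le_iff₀ hypos] at hb
    nlinarith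
  -- continuity of F and F' on Icc t₀ t₁
  have hFcontT : ContinuousOn F (Icc 0 T) := fun t ht => (hd1 t ht).continuousWithinAt
  have hF'contT : ContinuousOn F' (Icc 0 T) := fun t ht => (hd2 t ht).continuousWithinAt
  have hFcont : ContinuousOn F (Icc t₀ t₁) := hFcontT.mono hsubIcc
  have hF'cont : ContinuousOn F' (Icc t₀ t₁) := hF'contT.mono hsubIcc
  -- polynomial derivatives
  have hpow2 : ∀ (c t : ℝ), HasDerivAt (fun s => c * (s - t₀) ^ 2) (c * (2 * (t - t₀))) t := by
    intro c t
    have h := (((hasDerivAt_id t).sub_const t₀).pow 2).const_mul c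
    refine h.congr_deriv ?_
    simp only [id_eq]
    push_cast
    ring
  have hpow3 : ∀ (c t : ℝ), HasDerivAt (fun s => c * (s - t₀) ^ 3) (c * (3 * (t - t₀) ^ 2)) t := by
    intro c t
    have h := (((hasDerivAt_id t).sub_const t₀).pow 3).const_mul c
    refine h.congr_deriv ?_
    simp only [id_eq]
    push_cast
    ring
  -- lower bound on F' : F' t ≥ (F₃/4)(t-t₀)²  on [t₀,t₁]
  have hF'lb : ∀ t ∈ Icc t₀ t₁, F₃ / 4 * (t - t₀) ^ 2 ≤ F' t := by
    have key := stmt4_mono_aux (g := fun t => F' t - F₃ / 4 * (t - t₀) ^ 2)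
      (g' := fun t => F'' t - F₃ / 4 * (2 * (t - t₀))) (le_of_lt ht₀t₁)
      (hF'cont.sub (by fun_prop))
      (fun t ht => (((hd2 t (hsubIoo ht)).mono hsubIoo).sub
        ((hpow2 (F₃ / 4) t).hasDerivWithinAt)))
      (fun t ht => by have := hF''lb t ht; linarith)
    intro t ht
    have := key t ht
    simp only [sub_self, ne_eq, hF't₀] at this
    nlinarith [this]
  -- upper bound on F' : F' t ≤ (3F₃/4)(t-t₀)²  on [t₀,t₁]
  have hF'ub : ∀ t ∈ Icc t₀ t₁, F' t ≤ 3 * F₃ / 4 * (t - t₀) ^ 2 := by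
    have key := stmt4_mono_aux (g := fun t => 3 * F₃ / 4 * (t - t₀) ^ 2 - F' t)
      (g' := fun t => 3 * F₃ / 4 * (2 * (t - t₀)) - F'' t) (le_of_lt ht₀t₁)
      ((by fun_prop : ContinuousOn (fun t : ℝ => 3 * F₃ / 4 * (t - t₀) ^ 2) (Icc t₀ t₁)).sub hF'cont)
      (fun t ht => ((hpow2 (3 * F₃ / 4) t).hasDerivWithinAt).sub
        ((hd2 t (hsubIoo ht)).mono hsubIoo))
      (fun t ht => by have := hF''ub t ht; linarith)
    intro t ht
    have := key t ht
    simp only [sub_self, hF't₀] at this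
    nlinarith [this]
  -- lower bound on F : F t - F t₀ ≥ (F₃/12)(t-t₀)³
  have hFlb : ∀ t ∈ Icc t₀ t₁, F₃ / 12 * (t - t₀) ^ 3 ≤ F t - F t₀ := by
    have key := stmt4_mono_aux (g := fun t => F t - F₃ / 12 * (t - t₀) ^ 3)
      (g' := fun t => F' t - F₃ / 12 * (3 * (t - t₀) ^ 2)) (le_of_lt ht₀t₁)
      (hFcont.sub (by fun_prop))
      (fun t ht => (((hd1 t (hsubIoo ht)).mono hsubIoo).sub
        ((hpow3 (F₃ / 12) t).hasDerivWithinAt)))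
      (fun t ht => by
        have := hF'lb t (Ioo_subset_Icc_self ht)
        nlinarith [this])
    intro t ht
    have := key t ht
    simp only [sub_self] at this
    nlinarith [this]
  -- upper bound on F : F t - F t₀ ≤ (F₃/4)(t-t₀)³
  have hFub : ∀ t ∈ Icc t₀ t₁, F t - F t₀ ≤ F₃ / 4 * (t - t₀) ^ 3 := by
    have key := stmt4_mono_aux (g := fun t => F₃ / 4 * (t - t₀) ^ 3 - F t)
      (g' := fun t => F₃ / 4 * (3 * (t - t₀) ^ 2) - F' t) (le_of_lt ht₀t₁)
      ((by fun_prop : ContinuousOn (fun t : ℝ => F₃ / 4 * (t - t₀) ^ 3) (Icc t₀ t₁)).sub hFcont)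
      (fun t ht => ((hpow3 (F₃ / 4) t).hasDerivWithinAt).sub
        ((hd1 t (hsubIoo ht)).mono hsubIoo))
      (fun t ht => by
        have := hF'ub t (Ioo_subset_Icc_self ht)
        nlinarith [this])
    intro t ht
    have := key t ht
    simp only [sub_self] at this
    nlinarith [this]
  -- the sequence
  set v : ℝ → ℝ := fun x => F' (Finv x) with hvdef
  set x₀ : ℝ := F t₀ with hx₀def
  set θ : ℕ → ℝ := fun n => δ / (n + 1) with hθdef
  have hθpos : ∀ n, 0 < θ n := fun n => by
    apply div_pos hδpos
    positivity
  have hθle : ∀ n, θ n ≤ δ := fun n => by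
    rw [hθdef]
    rw [div_le_iff₀ (by positivity : (0:ℝ) < (n:ℝ) + 1)]
    nlinarith [hδpos, (Nat.cast_nonneg n : (0:ℝ) ≤ (n:ℝ))]
  set tn : ℕ → ℝ := fun n => t₀ + θ n with htndef
  have htnIcc : ∀ n, tn n ∈ Icc t₀ t₁ := fun n =>
    ⟨by simp [htndef]; linarith [hθpos n], by simp [htndef, ht₁def]; linarith [hθle n]⟩
  set xn : ℕ → ℝ := fun n => F (tn n) with hxndef
  have hsub : ∀ n, tn n - t₀ = θ n := fun n => by simp [htndef]
  have hxl : ∀ n, F₃ / 12 * (θ n) ^ 3 ≤ xn n - x₀ := fun n => by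
    have := hFlb (tn n) (htnIcc n); rwa [hsub n] at this
  have hxu : ∀ n, xn n - x₀ ≤ F₃ / 4 * (θ n) ^ 3 := fun n => by
    have := hFub (tn n) (htnIcc n); rwa [hsub n] at this
  have hxpos : ∀ n, 0 < xn n - x₀ := fun n =>
    lt_of_lt_of_le (by have := hθpos n; positivity) (hxl n)
  -- xn ∈ Icc 0 xf and xn ≠ x₀
  have hmonoF : MonotoneOn F (Icc 0 T) := hsm.monotoneOn
  have hxnmem : ∀ n, xn n ∈ Icc 0 xf \ {x₀} := by
    intro n
    have htn : tn n ∈ Icc 0 T := hsubIcc (htnIcc n)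
    refine ⟨⟨?_, ?_⟩, ?_⟩
    · rw [← hF0]; exact hmonoF (left_mem_Icc.2 (le_of_lt hT)) htn htn.1
    · rw [← hFT]; exact hmonoF htn (right_mem_Icc.2 (le_of_lt hT)) htn.2
    · simp only [mem_singleton_iff]
      intro h
      have := hxpos n
      rw [h] at this
      linarith
  -- xn → x₀
  have hθtend : Tendsto θ atTop (nhds 0) := by
    rw [hθdef]
    exact Tendsto.div_atTop tendsto_const_nhds
      (tendsto_atTop_add_const_right _ 1 tendsto_natCast_atTop_atTop)
  have hxtend : Tendsto xn atTop (nhds x₀) := by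
    have h1 : Tendsto (fun n => xn n - x₀) atTop (nhds 0) := by
      apply squeeze_zero (fun n => le_of_lt (hxpos n)) (fun n => hxu n)
      have : Tendsto (fun n => F₃ / 4 * (θ n) ^ 3) atTop (nhds (F₃ / 4 * 0 ^ 3)) :=
        (tendsto_const_nhds.mul ((hθtend.pow 3)))
      simpa using this
    have := h1.add_const x₀
    simpa using this
  have hxtendW : Tendsto xn atTop (nhdsWithin x₀ (Icc 0 xf \ {x₀})) :=
    tendsto_nhdsWithin_of_tendsto_nhds_of_eventually_within _ hxtend
      (Eventually.of_forall hxnmem)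
  -- slope of v along xn tends to derivative
  obtain ⟨L, hL⟩ := hdiff
  have hL' : HasDerivWithinAt v (L 1) (Icc 0 xf) x₀ := hL.hasDerivWithinAt
  have hslv : Tendsto (slope v x₀) (nhdsWithin x₀ (Icc 0 xf \ {x₀})) (nhds (L 1)) :=
    hasDerivWithinAt_iff_tendsto_slope.mp hL'
  have hseq : Tendsto (fun n => slope v x₀ (xn n)) atTop (nhds (L 1)) :=
    hslv.comp hxtendW
  -- but the slopes blow up
  have hvx₀ : v x₀ = 0 := by
    simp only [hvdef, hx₀def]
    rw [hFinvF t₀ ht₀Icc, hF't₀]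
  have hvxn : ∀ n, v (xn n) = F' (tn n) := fun n => by
    simp only [hvdef, hxndef]
    rw [hFinvF (tn n) (hsubIcc (htnIcc n))]
  have hslopege : ∀ n : ℕ, ((n : ℝ) + 1) / δ ≤ slope v x₀ (xn n) := by
    intro n
    rw [slope_def_field, hvx₀, sub_zero, hvxn n]
    have hnum : F₃ / 4 * (θ n) ^ 2 ≤ F' (tn n) := by
      have := hF'lb (tn n) (htnIcc n); rwa [hsub n] at this
    have hden := hxpos n
    have hdenu := hxu n
    have hθ := hθpos n
    rw [div_le_div_iff₀ (by positivity) hden]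
    have hδθ : ((n:ℝ) + 1) * θ n = δ := by
      rw [hθdef]; field_simp
    have hN : (0:ℝ) ≤ (n:ℝ) + 1 := by positivity
    have h1 : ((n:ℝ) + 1) * (xn n - x₀) ≤ ((n:ℝ) + 1) * (F₃ / 4 * (θ n) ^ 3) :=
      mul_le_mul_of_nonneg_left hdenu hN
    have h2 : ((n:ℝ) + 1) * (F₃ / 4 * (θ n) ^ 3) = F₃ / 4 * (θ n) ^ 2 * δ := by
      rw [← hδθ]; ring
    have h3 : F₃ / 4 * (θ n) ^ 2 * δ ≤ F' (tn n) * δ :=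
      mul_le_mul_of_nonneg_right hnum (le_of_lt hδpos)
    linarith
  have hblow : Tendsto (fun n => slope v x₀ (xn n)) atTop atTop := by
    apply tendsto_atTop_mono hslopege
    exact (tendsto_atTop_add_const_right _ 1 tendsto_natCast_atTop_atTop).atTop_div_const hδpos
  exact not_tendsto_atTop_of_tendsto_nhds hseq hblow
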